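/- Over the ring of integers ℤ, a module is absolutely self pure if and only if it is quasi injective. -/

import Mathlib

universe u v w

/-- The annihilator of an element `a` of a left `R`-module, as a left ideal of `R`. -/
def annihilatorOf (R : Type u) [Ring R] {A : Type v} [AddCommGroup A] [Module R A] (a : A) :
    Submodule R R := LinearMap.ker (LinearMap.toSpanSingleton R A a)

/-- `J` belongs to the filter `Ω̄(A)` of left ideals generated by annihilators of elements of
`A`, i.e. `J` contains a finite intersection of annihilators of elements of `A`. -/
def MemOmegaBar (R : Type u) [Ring R] (A : Type v) [AddCommGroup A] [Module R A]
    (J : Submodule R R) : Prop :=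
  ∃ s : Finset A, (⨅ a ∈ s, annihilatorOf R a) ≤ J

/-- `A` is a self pure submodule of `B` (along the injection `i`): every map `f : L → A` from a
finitely generated left ideal with `ker f ∈ Ω̄(A)` which extends to a map `R → B` also extends
to a map `R → A`. -/
def IsSelfPureIn (R : Type u) [Ring R] {A : Type v} {B : Type w} [AddCommGroup A] [Module R A]
    [AddCommGroup B] [Module R B] (i : A →ₗ[R] B) : Prop :=
  ∀ L : Submodule R R, L.FG → ∀ f : L →ₗ[R] A,
    MemOmegaBar R A ((LinearMap.ker f).map L.subtype) →
    (∃ g : R →ₗ[R] B, ∀ x : L, g x = i (f x)) →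
    ∃ h : R →ₗ[R] A, ∀ x : L, h x = f x

/-- `A` is absolutely self pure: every map `f : L → A` from a finitely generated left ideal of
`R` with `ker f ∈ Ω̄(A)` extends to a map `R → A`. -/
def AbsolutelySelfPure (R : Type u) [Ring R] (A : Type v) [AddCommGroup A] [Module R A] : Prop :=
  ∀ L : Submodule R R, L.FG → ∀ f : L →ₗ[R] A,
    MemOmegaBar R A ((LinearMap.ker f).map L.subtype) →
    ∃ h : R →ₗ[R] A, ∀ x : L, h x = f x

/-- `Q` is quasi injective: every homomorphism from a submodule of `Q` into `Q` extends to an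
endomorphism of `Q`. -/
def IsQuasiInjective (R : Type u) [Ring R] (Q : Type v) [AddCommGroup Q] [Module R Q] : Prop :=
  ∀ (N : Submodule R Q) (f : N →ₗ[R] Q), ∃ g : Q →ₗ[R] Q, ∀ x : N, g x = f x

/-- `A` is a pure submodule of `B` (along `i`): for every finitely generated submodule `K` of a
finite free module and every commuting square, a map `F → A` makes the upper triangle commute. -/
def IsPureIn (R : Type u) [Ring R] {A : Type v} {B : Type w} [AddCommGroup A] [Module R A]
    [AddCommGroup B] [Module R B] (i : A →ₗ[R] B) : Prop :=
  ∀ (n : ℕ) (K : Submodule R (Fin n → R)), K.FG →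
    ∀ (f : K →ₗ[R] A) (g : (Fin n → R) →ₗ[R] B),
      (∀ x : K, g x = i (f x)) →
      ∃ h : (Fin n → R) →ₗ[R] A, ∀ x : K, h x = f x

/-- `A` is absolutely pure: every map into `A` from a finitely generated submodule of a finite
free module extends to the free module. -/
def IsAbsolutelyPure (R : Type u) [Ring R] (A : Type v) [AddCommGroup A] [Module R A] : Prop :=
  ∀ (n : ℕ) (K : Submodule R (Fin n → R)), K.FG →
    ∀ f : K →ₗ[R] A, ∃ g : (Fin n → R) →ₗ[R] A, ∀ x : K, g x = f x

namespace IntASP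

variable {M : Type v} [AddCommGroup M] [Module ℤ M]

lemma mem_annihilatorOf_iff {a : M} {r : ℤ} :
    r ∈ annihilatorOf ℤ a ↔ (addOrderOf a : ℤ) ∣ r := by
  have h1 : LinearMap.toSpanSingleton ℤ M a r = r • a := by
    rw [LinearMap.toSpanSingleton_apply]; exact Int.cast_smul_eq_zsmul ℤ r a
  rw [annihilatorOf, LinearMap.mem_ker, h1, ← addOrderOf_dvd_iff_zsmul_eq_zero]

lemma exists_ann_le_pair (a b : M) :
    ∃ c : M, annihilatorOf ℤ c ≤ annihilatorOf ℤ a ⊓ annihilatorOf ℤ b := by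
  obtain ⟨c, -, hc⟩ := (AddCommute.all a b).exists_addOrderOf_eq_lcm
  have key : ∀ (x : M), addOrderOf x ∣ addOrderOf c → annihilatorOf ℤ c ≤ annihilatorOf ℤ x := by
    intro x hx r hr
    rw [mem_annihilatorOf_iff] at hr ⊢
    exact dvd_trans (Int.natCast_dvd_natCast.mpr hx) hr
  exact ⟨c, le_inf (key a (by rw [hc]; exact Nat.dvd_lcm_left _ _))
    (key b (by rw [hc]; exact Nat.dvd_lcm_right _ _))⟩

lemma exists_ann_le_finset (s : Finset M) :
    ∃ c : M, annihilatorOf ℤ c ≤ ⨅ a ∈ s, annihilatorOf ℤ a := by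
  classical
  rw [← Finset.inf_eq_iInf]
  induction s using Finset.induction_on with
  | empty => exact ⟨0, by simp⟩
  | @insert a s _ ih =>
    obtain ⟨c, hc⟩ := ih
    obtain ⟨c', hc'⟩ := exists_ann_le_pair a c
    refine ⟨c', ?_⟩
    rw [Finset.inf_insert]
    exact hc'.trans (inf_le_inf_left _ hc)

theorem asp_of_qi (hqi : IsQuasiInjective ℤ M) : AbsolutelySelfPure ℤ M := by
  intro L _ f hmem
  obtain ⟨s, hs⟩ := hmem
  obtain ⟨c, hc⟩ := exists_ann_le_finset s
  have hcK : annihilatorOf ℤ c ≤ (LinearMap.ker f).map L.subtype := le_trans hc hs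
  obtain ⟨n, rfl⟩ := (IsPrincipalIdealRing.principal L).principal
  rcases eq_or_ne n 0 with rfl | hn0
  · refine ⟨0, fun x => ?_⟩
    have hb : (x : ℤ) ∈ (⊥ : Submodule ℤ ℤ) := by
      rw [← Submodule.span_zero_singleton (R := ℤ)]; exact x.2
    have hx : x = 0 := Subtype.ext (Submodule.mem_bot ℤ |>.mp hb)
    rw [hx]
    simp
  · have hnL : n ∈ Submodule.span ℤ ({n} : Set ℤ) := Submodule.mem_span_singleton_self n
    set m := f ⟨n, hnL⟩ with hm
    set nc := LinearMap.toSpanSingleton ℤ M c n with hnc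
    set g1 := LinearMap.toSpanSingleton ℤ M nc with hg1
    have hg1c : ∀ t : ℤ, g1 t = LinearMap.toSpanSingleton ℤ M c (t * n) := by
      intro t
      rw [hg1, LinearMap.toSpanSingleton_apply, ← smul_eq_mul, LinearMap.map_smul, hnc]
    have hker : LinearMap.ker g1 ≤ LinearMap.ker (LinearMap.toSpanSingleton ℤ M m) := by
      intro t ht
      rw [LinearMap.mem_ker] at ht ⊢
      rw [hg1c t] at ht
      have h1 : t * n ∈ annihilatorOf ℤ c := ht
      obtain ⟨z, hz, hz2⟩ := Submodule.mem_map.mp (hcK h1)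
      have hzx : z = (t : ℤ) • (⟨n, hnL⟩ : Submodule.span ℤ ({n} : Set ℤ)) := by
        apply Subtype.ext
        rw [show ((z : Submodule.span ℤ ({n} : Set ℤ)) : ℤ) = t * n from hz2]
        rfl
      have hz0 : f z = 0 := hz
      rw [hzx, LinearMap.map_smul, ← hm] at hz0
      rw [LinearMap.toSpanSingleton_apply]
      exact hz0
    letI : Module ℤ (LinearMap.range g1) := (LinearMap.range g1).module
    obtain ⟨g, hg⟩ := hqi (LinearMap.range g1)
      ((Submodule.liftQ (LinearMap.ker g1) (LinearMap.toSpanSingleton ℤ M m) hker).comp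
        g1.quotKerEquivRange.symm.toLinearMap)
    have key : ∀ t : ℤ, g (g1 t) = LinearMap.toSpanSingleton ℤ M m t := by
      intro t
      have h2 : (⟨g1 t, LinearMap.mem_range_self g1 t⟩ : LinearMap.range g1) =
          g1.quotKerEquivRange (Submodule.Quotient.mk t) :=
        Subtype.ext (LinearMap.quotKerEquivRange_apply_mk g1 t).symm
      have h3 := hg ⟨g1 t, LinearMap.mem_range_self g1 t⟩
      rw [h2] at h3
      simp only [LinearMap.coe_comp, Function.comp_apply, LinearEquiv.coe_coe,
        LinearEquiv.symm_apply_apply, Submodule.liftQ_apply] at h3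
      have h4 : g1 t = ((g1.quotKerEquivRange (Submodule.Quotient.mk t)) : M) :=
        (LinearMap.quotKerEquivRange_apply_mk g1 t).symm
      rw [h4]
      exact h3
    refine ⟨LinearMap.toSpanSingleton ℤ M (g c), fun x => ?_⟩
    obtain ⟨t, ht⟩ := Submodule.mem_span_singleton.mp x.2
    have hx : x = (t : ℤ) • (⟨n, hnL⟩ : Submodule.span ℤ ({n} : Set ℤ)) := by
      apply Subtype.ext
      rw [← ht]
      simp [smul_eq_mul]
    have h5 : LinearMap.toSpanSingleton ℤ M (g c) (t * n) = g (g1 t) := by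
      rw [hg1c t]
      rw [LinearMap.toSpanSingleton_apply, LinearMap.toSpanSingleton_apply, LinearMap.map_smul]
    have hco : ((t • (⟨n, hnL⟩ : Submodule.span ℤ ({n} : Set ℤ)) :
        Submodule.span ℤ ({n} : Set ℤ)) : ℤ) = t * n := by
      simp [smul_eq_mul]
    rw [hx, LinearMap.map_smul, ← hm, hco, h5, key t, LinearMap.toSpanSingleton_apply]

attribute [local instance 2000] SemigroupAction.toSMul
attribute [local instance 2000] DistribMulAction.toMulAction
attribute [local instance 2001] Submodule.module

/-- The weak Baer-type extension property that `AbsolutelySelfPure ℤ M` provides: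
any map from an ideal of `ℤ` whose kernel contains the annihilator of some `y : M`
extends to `ℤ`. -/
def WB (M : Type v) [AddCommGroup M] [Module ℤ M] : Prop :=
  ∀ (I : Ideal ℤ) (y : M) (g : I →ₗ[ℤ] M),
    (∀ r : ℤ, r • y = 0 → ∃ mem : r ∈ I, g ⟨r, mem⟩ = 0) →
    ∃ g' : ℤ →ₗ[ℤ] M, ∀ (x : ℤ) (mem : x ∈ I), g' x = g ⟨x, mem⟩

theorem wb_of_asp (h : AbsolutelySelfPure ℤ M) : WB M := by
  intro I y g hker
  have hfg : I.FG := IsNoetherian.noetherian I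
  have hmem : MemOmegaBar ℤ M ((LinearMap.ker g).map I.subtype) := by
    refine ⟨{y}, ?_⟩
    intro r hr
    have hr' : r ∈ annihilatorOf ℤ y := by
      simpa using hr
    have hr0 : r • y = 0 := by
      have : LinearMap.toSpanSingleton ℤ M y r = 0 := hr'
      rw [LinearMap.toSpanSingleton_apply] at this
      exact this
    obtain ⟨mem, h0⟩ := hker r hr0
    exact Submodule.mem_map.mpr ⟨⟨r, mem⟩, LinearMap.mem_ker.mpr h0, rfl⟩
  obtain ⟨g', hg'⟩ := h I hfg g hmem
  exact ⟨g', fun x mem => hg' ⟨x, mem⟩⟩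

section Hard

open Module.Baer Module.Baer.ExtensionOfMaxAdjoin

variable {M₀ : Type v} [AddCommGroup M₀] [Module ℤ M₀]
variable (i : M₀ →ₗ[ℤ] M) (f : M₀ →ₗ[ℤ] M) [Fact (Function.Injective i)]

theorem idealTo_ker (y : M) (r : ℤ) (hr : r • y = 0) :
    ∃ mem : r ∈ ideal i f y, idealTo i f y ⟨r, mem⟩ = 0 := by
  have mem : r ∈ ideal i f y := by
    show r • y ∈ (extensionOfMax i f).domain
    rw [hr]
    exact Submodule.zero_mem _
  refine ⟨mem, ?_⟩
  show (extensionOfMax i f).toLinearPMap ⟨r • y, mem⟩ = 0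
  have h0 : (⟨r • y, mem⟩ : (extensionOfMax i f).domain) = 0 := Subtype.ext hr
  rw [h0, (extensionOfMax i f).toLinearPMap.map_zero]

/-- extend the map `idealTo` using the weak Baer property. -/
noncomputable def extendIdealTo' (h : WB M) (y : M) : ℤ →ₗ[ℤ] M :=
  (h (ideal i f y) y (idealTo i f y) (idealTo_ker i f y)).choose

theorem extendIdealTo'_is_extension (h : WB M) (y : M) :
    ∀ (x : ℤ) (mem : x ∈ ideal i f y),
      extendIdealTo' i f h y x = idealTo i f y ⟨x, mem⟩ :=
  (h (ideal i f y) y (idealTo i f y) (idealTo_ker i f y)).choose_spec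

theorem extendIdealTo'_wd' (h : WB M) {y : M} (r : ℤ) (eq1 : r • y = 0) :
    extendIdealTo' i f h y r = 0 := by
  obtain ⟨mem, h0⟩ := idealTo_ker i f y r eq1
  rw [extendIdealTo'_is_extension i f h y r mem, h0]

theorem extendIdealTo'_wd (h : WB M) {y : M} (r r' : ℤ) (eq1 : r • y = r' • y) :
    extendIdealTo' i f h y r = extendIdealTo' i f h y r' := by
  rw [← sub_eq_zero, ← map_sub]
  convert extendIdealTo'_wd' i f h (r - r') _
  rw [sub_smul, sub_eq_zero, eq1]

theorem extendIdealTo'_eq (h : WB M) {y : M} (r : ℤ)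
    (hr : r • y ∈ (extensionOfMax i f).domain) : extendIdealTo' i f h y r =
    (extensionOfMax i f).toLinearPMap ⟨r • y, hr⟩ := by
  simp only [extendIdealTo'_is_extension i f h _ _ hr,
    Module.Baer.ExtensionOfMaxAdjoin.idealTo, LinearMap.coe_mk, Subtype.coe_mk, AddHom.coe_mk]

/-- A linear map `N' ⊔ ⟨y⟩ → M` by `x + r • y ↦ f' x + φ r`. -/
noncomputable def extensionToFun' (h : WB M) {y : M} :
    supExtensionOfMaxSingleton i f y → M := fun x =>
  (extensionOfMax i f).toLinearPMap (ExtensionOfMaxAdjoin.fst i x) +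
    extendIdealTo' i f h y (ExtensionOfMaxAdjoin.snd i x)

theorem extensionToFun'_wd (h : WB M) {y : M}
    (x : supExtensionOfMaxSingleton i f y) (a : (extensionOfMax i f).domain)
    (r : ℤ) (eq1 : ↑x = ↑a + r • y) :
    extensionToFun' i f h x =
      (extensionOfMax i f).toLinearPMap a + extendIdealTo' i f h y r := by
  cases' a with a ha
  have eq2 :
    (ExtensionOfMaxAdjoin.fst i x - a : M) = (r - ExtensionOfMaxAdjoin.snd i x) • y := by
    change ↑x = a + r • y at eq1
    rwa [ExtensionOfMaxAdjoin.eqn, ← sub_eq_zero, ← sub_sub_sub_eq, sub_eq_zero, ← sub_smul]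
      at eq1
  have eq3 :=
    extendIdealTo'_eq i f h (r - ExtensionOfMaxAdjoin.snd i x)
      (by rw [← eq2]; exact Submodule.sub_mem _ (ExtensionOfMaxAdjoin.fst i x).2 ha)
  simp only [map_sub, sub_smul, sub_eq_iff_eq_add] at eq3
  unfold extensionToFun'
  rw [eq3, ← add_assoc, ← (extensionOfMax i f).toLinearPMap.map_add, AddMemClass.mk_add_mk]
  congr
  ext
  dsimp
  rw [Subtype.coe_mk, add_sub, ← eq1]
  exact eq_sub_of_add_eq (ExtensionOfMaxAdjoin.eqn i x).symm

/-- The linear map `N' ⊔ ⟨y⟩ → M` by `x + r • y ↦ f' x + φ r` is an extension of `f'`. -/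
noncomputable def extensionOfMaxAdjoin' (h : WB M) (y : M) : ExtensionOf i f where
  domain := supExtensionOfMaxSingleton i f y
  le := le_trans (extensionOfMax i f).le le_sup_left
  toFun :=
    { toFun := extensionToFun' i f h
      map_add' := fun a b => by
        have eq1 :
          ↑a + ↑b =
            ↑(ExtensionOfMaxAdjoin.fst i a + ExtensionOfMaxAdjoin.fst i b) +
              (ExtensionOfMaxAdjoin.snd i a + ExtensionOfMaxAdjoin.snd i b) • y := by
          rw [ExtensionOfMaxAdjoin.eqn, ExtensionOfMaxAdjoin.eqn, add_smul, Submodule.coe_add]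
          ac_rfl
        rw [extensionToFun'_wd (y := y) i f h (a + b) _ _ eq1,
          LinearPMap.map_add, map_add]
        unfold extensionToFun'
        abel
      map_smul' := fun r a => by
        dsimp
        have eq1 :
          r • (a : M) =
            ↑(r • ExtensionOfMaxAdjoin.fst i a) + (r • ExtensionOfMaxAdjoin.snd i a) • y := by
          rw [ExtensionOfMaxAdjoin.eqn, smul_add, smul_eq_mul, mul_smul]
          rfl
        rw [extensionToFun'_wd i f h (r • a :) _ _ eq1, LinearMap.map_smul,
          LinearPMap.map_smul, ← smul_add]
        congr }
  is_extension m := by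
    dsimp
    rw [(extensionOfMax i f).is_extension,
      extensionToFun'_wd i f h _ ⟨i m, _⟩ 0 _, map_zero, add_zero]
    simp
    have h0 : ((1 : ℤ) - 1) • y = (1 : ℤ) • y - (1 : ℤ) • y := sub_smul 1 1 y
    simpa using h0

theorem extensionOfMax_le' (h : WB M) {y : M} :
    extensionOfMax i f ≤ extensionOfMaxAdjoin' i f h y :=
  ⟨le_sup_left, fun x x' EQ => by
    symm
    change extensionToFun' i f h _ = _
    rw [extensionToFun'_wd i f h x' x 0 (by
        have h0 : (0 : ℤ) • y = 0 := by
          have h1 : ((1 : ℤ) - 1) • y = (1 : ℤ) • y - (1 : ℤ) • y := sub_smul 1 1 y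
          simpa using h1
        rw [h0, add_zero]
        exact EQ.symm), map_zero,
      add_zero]⟩

theorem extensionOfMax_to_submodule_eq_top' (h : WB M) :
    (extensionOfMax i f).domain = ⊤ := by
  refine Submodule.eq_top_iff'.mpr fun y => ?_
  rw [← extensionOfMax_is_max i f _ (extensionOfMax_le' i f h), extensionOfMaxAdjoin',
    Submodule.mem_sup]
  exact ⟨0, Submodule.zero_mem _, y, Submodule.mem_span_singleton_self _, zero_add _⟩

theorem extension_property' (h : WB M) : ∃ g : M →ₗ[ℤ] M, ∀ x : M₀, g (i x) = f x := by
  have htop := extensionOfMax_to_submodule_eq_top' i f h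
  refine ⟨{ toFun := fun z => (extensionOfMax i f).toLinearPMap ⟨z, htop.symm ▸ ⟨⟩⟩,
            map_add' := fun x y => by rw [← LinearPMap.map_add]; congr,
            map_smul' := fun r x => by rw [← LinearPMap.map_smul]; dsimp },
    fun x => ?_⟩
  exact ((extensionOfMax i f).is_extension x).symm

end Hard

theorem qi_of_asp (h : AbsolutelySelfPure ℤ M) : IsQuasiInjective ℤ M := by
  intro N f
  haveI : Fact (Function.Injective N.subtype) := ⟨Subtype.val_injective⟩
  obtain ⟨g, hg⟩ := extension_property' N.subtype f (wb_of_asp h)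
  exact ⟨g, hg⟩

end IntASP

theorem int_absolutelySelfPure_iff_quasiInjective (M : Type v) [AddCommGroup M]
    [Module ℤ M] :
    AbsolutelySelfPure ℤ M ↔ IsQuasiInjective ℤ M :=
  ⟨IntASP.qi_of_asp, IntASP.asp_of_qi⟩
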